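/- Let φ : ℝⁿ → ℝ be C² near x₀ = (√(ab),0,...,0) with a,b > 0, and suppose φ ≤ u near x₀ and φ(x₀)=u(x₀), where u is a radially symmetric locally Lipschitz function whose one-sided radial derivatives of ln u at r = √(ab) are −(n−2)/√(ab) from the left and 0 from the right. Then: (1) −(n−2)/√(ab) ≤ ∂_{x₁} ln φ(x₀) ≤ 0; (2) ∂_{xⱼ} ln φ(x₀) = 0 for j = 2,...,n; (3) the (n−1)×(n−1) matrix (∂_{xᵢ}∂_{xⱼ}φ(x₀) − (1/√(ab)) ∂_{x₁}φ(x₀) δᵢⱼ)_{2≤i,j≤n} is negative semidefinite. -/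

import Mathlib

open Real

noncomputable section

open Set Filter Topology RealInnerProductSpace

set_option maxHeartbeats 2000000

/-- One-sided derivative from the right at a local max is nonpositive. -/
lemma deriv_right_nonpos_of_localmax {f : ℝ → ℝ} {d x : ℝ}
    (hf : HasDerivWithinAt f d (Set.Ici x) x) (h : ∀ᶠ t in 𝓝 x, f t ≤ f x) : d ≤ 0 := by
  rw [hasDerivWithinAt_iff_tendsto_slope] at hf
  have hs : Set.Ici x \ {x} = Set.Ioi x := by ext t; simp [lt_iff_le_and_ne, eq_comm, and_comm]
  rw [hs] at hf
  refine le_of_tendsto hf ?_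
  filter_upwards [self_mem_nhdsWithin, (eventually_nhdsWithin_of_eventually_nhds h :
    ∀ᶠ t in 𝓝[>] x, f t ≤ f x)] with t ht hft
  rw [slope_def_field]
  exact div_nonpos_of_nonpos_of_nonneg (by linarith) (by linarith [mem_Ioi.1 ht])

/-- One-sided derivative from the left at a local max is nonnegative. -/
lemma deriv_left_nonneg_of_localmax {f : ℝ → ℝ} {d x : ℝ}
    (hf : HasDerivWithinAt f d (Set.Iic x) x) (h : ∀ᶠ t in 𝓝 x, f t ≤ f x) : 0 ≤ d := by
  rw [hasDerivWithinAt_iff_tendsto_slope] at hf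
  have hs : Set.Iic x \ {x} = Set.Iio x := by ext t; simp [lt_iff_le_and_ne]
  rw [hs] at hf
  refine ge_of_tendsto hf ?_
  filter_upwards [self_mem_nhdsWithin, (eventually_nhdsWithin_of_eventually_nhds h :
    ∀ᶠ t in 𝓝[<] x, f t ≤ f x)] with t ht hft
  rw [slope_def_field, ← neg_div_neg_eq]
  exact div_nonneg (by linarith) (by linarith [mem_Iio.1 ht])

/-- Second-derivative test (necessary direction) at a local max. -/
lemma second_deriv_nonpos_of_localmax {f g : ℝ → ℝ} {s : ℝ}
    (hev : ∀ᶠ t in 𝓝 (0:ℝ), HasDerivAt f (g t) t) (hg : HasDerivAt g s 0)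
    (hmax : ∀ᶠ t in 𝓝 (0:ℝ), f t ≤ f 0) : s ≤ 0 := by
  have hlm : IsLocalMax f 0 := hmax
  have hg0 : g 0 = 0 := hlm.hasDerivAt_eq_zero hev.self_of_nhds
  by_contra hs
  push_neg at hs
  have hslope : Tendsto (slope g 0) (𝓝[≠] 0) (𝓝 s) := hasDerivAt_iff_tendsto_slope.1 hg
  have h1 : ∀ᶠ t in 𝓝[>] (0:ℝ), 0 < g t := by
    have := (hslope.mono_left (nhdsWithin_mono _ (fun t ht => by
      exact ne_of_gt (mem_Ioi.1 ht)))).eventually (eventually_gt_nhds hs)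
    filter_upwards [this, self_mem_nhdsWithin] with t ht ht'
    rw [slope_def_field, hg0, sub_zero, sub_zero] at ht
    have htpos := mem_Ioi.1 ht'
    have : 0 < (g t / t) * t := mul_pos ht htpos
    rwa [div_mul_cancel₀ _ (ne_of_gt htpos)] at this
  rw [eventually_nhdsWithin_iff] at h1
  obtain ⟨δ, hδ, hδall⟩ := Metric.eventually_nhds_iff.1 (hev.and (hmax.and h1))
  have hmono : StrictMonoOn f (Set.Icc 0 (δ/2)) := by
    apply strictMonoOn_of_deriv_pos (convex_Icc _ _)
    · intro t ht
      have : dist t 0 < δ := by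
        rw [Real.dist_eq, abs_lt]; constructor <;> [linarith [ht.1]; linarith [ht.2]]
      exact ((hδall this).1.continuousAt).continuousWithinAt
    · intro t ht
      rw [interior_Icc] at ht
      have hdist : dist t 0 < δ := by
        rw [Real.dist_eq, abs_lt]; constructor <;> [linarith [ht.1]; linarith [ht.2]]
      rw [(hδall hdist).1.deriv]
      exact (hδall hdist).2.2 ht.1
  have h2 : f 0 < f (δ/2) :=
    hmono (by constructor <;> linarith) (by constructor <;> linarith) (by linarith)
  have h3 : f (δ/2) ≤ f 0 :=
    (hδall (show dist (δ/2) 0 < δ by rw [Real.dist_eq, abs_lt]; constructor <;> linarith)).2.1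
  linarith



/-- first- and second-order conditions at a touching point on the sphere
`{|x| = √(ab)}` where the radial derivative of the radial function `u(x) = U(|x|)` jumps. -/
theorem stmt13 (n : ℕ) (hn : 3 ≤ n) (a b : ℝ) (ha : 0 < a) (hb : 0 < b)
    (U : ℝ → ℝ) (hUpos : ∀ r, 0 < U r) (hULip : LocallyLipschitz U)
    -- one-sided derivatives of ln U at r = √(ab): −(n−2)/√(ab) from the left, 0 from the right
    (hleft : HasDerivWithinAt (fun r => Real.log (U r))
      (-((n : ℝ) - 2) / Real.sqrt (a * b)) (Set.Iic (Real.sqrt (a * b))) (Real.sqrt (a * b)))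
    (hright : HasDerivWithinAt (fun r => Real.log (U r))
      (0 : ℝ) (Set.Ici (Real.sqrt (a * b))) (Real.sqrt (a * b)))
    (φ : EuclideanSpace ℝ (Fin n) → ℝ)
    (x₀ : EuclideanSpace ℝ (Fin n))
    (hx₀ : x₀ = EuclideanSpace.single (⟨0, by omega⟩ : Fin n) (Real.sqrt (a * b)))
    (hφ : ContDiffAt ℝ 2 φ x₀)
    -- φ touches u(x) = U(|x|) from below at x₀
    (htouch : ∀ᶠ x in nhds x₀, φ x ≤ U ‖x‖)
    (heq : φ x₀ = U ‖x₀‖) :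
    (-((n : ℝ) - 2) / Real.sqrt (a * b)
        ≤ fderiv ℝ (fun x => Real.log (φ x)) x₀
            (EuclideanSpace.single (⟨0, by omega⟩ : Fin n) 1)
      ∧ fderiv ℝ (fun x => Real.log (φ x)) x₀
            (EuclideanSpace.single (⟨0, by omega⟩ : Fin n) 1) ≤ 0)
    ∧ (∀ j : Fin n, j ≠ (⟨0, by omega⟩ : Fin n) →
        fderiv ℝ (fun x => Real.log (φ x)) x₀ (EuclideanSpace.single j 1) = 0)
    -- negative semidefiniteness, expressed as positive semidefiniteness of the negation
    ∧ Matrix.PosSemidef (-(Matrix.of fun i j : {i : Fin n // i ≠ (⟨0, by omega⟩ : Fin n)} =>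
        fderiv ℝ (fun y => fderiv ℝ φ y (EuclideanSpace.single (j : Fin n) 1)) x₀
            (EuclideanSpace.single (i : Fin n) 1)
          - (1 / Real.sqrt (a * b)) *
              fderiv ℝ φ x₀ (EuclideanSpace.single (⟨0, by omega⟩ : Fin n) 1) *
              (if i = j then (1 : ℝ) else 0))) := by
  have hn0 : 0 < n := by omega
  set i0 : Fin n := ⟨0, by omega⟩ with hi0
  set r₀ : ℝ := Real.sqrt (a * b) with hr₀def
  have hr₀ : 0 < r₀ := Real.sqrt_pos.2 (mul_pos ha hb)
  set e : Fin n → EuclideanSpace ℝ (Fin n) := fun i => EuclideanSpace.single i 1 with he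
  -- basic geometric facts
  have hx₀e : x₀ = r₀ • e i0 := by
    rw [hx₀]; ext j
    simp [he, EuclideanSpace.single_apply, PiLp.smul_apply, mul_ite, smul_eq_mul]
  have hnorme : ∀ i, ‖e i‖ = 1 := fun i => by simp [he, EuclideanSpace.norm_single]
  have hnormx₀ : ‖x₀‖ = r₀ := by
    rw [hx₀, EuclideanSpace.norm_single]; exact abs_of_pos hr₀
  -- positivity of φ near x₀
  have hφx₀ : 0 < φ x₀ := by rw [heq]; exact hUpos _
  have hφpos : ∀ᶠ x in 𝓝 x₀, 0 < φ x := hφ.continuousAt (Ioi_mem_nhds hφx₀)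
  -- derivative of log ∘ φ
  have hdφ : HasFDerivAt φ (fderiv ℝ φ x₀) x₀ :=
    (hφ.differentiableAt two_ne_zero).hasFDerivAt
  have hlogφ : HasFDerivAt (fun x => Real.log (φ x)) ((φ x₀)⁻¹ • fderiv ℝ φ x₀) x₀ := by
    exact (Real.hasDerivAt_log (ne_of_gt hφx₀)).comp_hasFDerivAt x₀ hdφ
  have hflog : fderiv ℝ (fun x => Real.log (φ x)) x₀ = (φ x₀)⁻¹ • fderiv ℝ φ x₀ :=
    hlogφ.fderiv
  constructor
  · -- PART 1: one-sided bounds on the radial log-derivative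
    have hcurve : HasDerivAt (fun s : ℝ => s • e i0) (e i0) r₀ := by
      simpa using (hasDerivAt_id r₀).smul_const (e i0)
    have hF : HasDerivAt (fun t : ℝ => Real.log (φ (t • e i0)))
        (((φ x₀)⁻¹ • fderiv ℝ φ x₀) (e i0)) r₀ := by
      have := hlogφ.comp_hasDerivAt_of_eq r₀ hcurve hx₀e
      simpa [Function.comp_def] using this
    have hctt : Tendsto (fun t : ℝ => t • e i0) (𝓝 r₀) (𝓝 x₀) := by
      rw [hx₀e]; exact (continuous_id.smul continuous_const).tendsto r₀
    have hbound : ∀ᶠ t in 𝓝 r₀,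
        Real.log (φ (t • e i0)) - Real.log (U t) ≤ 0 := by
      filter_upwards [hctt.eventually htouch, hctt.eventually hφpos,
        eventually_gt_nhds hr₀] with t h1 h2 h3
      have hnt : ‖t • e i0‖ = t := by
        rw [norm_smul, hnorme, mul_one, Real.norm_eq_abs, abs_of_pos h3]
      rw [hnt] at h1
      have := Real.log_le_log h2 h1
      linarith
    have hmax : ∀ᶠ t in 𝓝 r₀,
        (fun t => Real.log (φ (t • e i0)) - Real.log (U t)) t ≤
        (fun t => Real.log (φ (t • e i0)) - Real.log (U t)) r₀ := by
      have h0 : Real.log (φ (r₀ • e i0)) - Real.log (U r₀) = 0 := by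
        rw [← hx₀e, heq, hnormx₀, sub_self]
      filter_upwards [hbound] with t ht
      simpa [h0] using ht
    have hL : 0 ≤ ((φ x₀)⁻¹ • fderiv ℝ φ x₀) (e i0) - (-((n : ℝ) - 2) / r₀) :=
      deriv_left_nonneg_of_localmax (hF.hasDerivWithinAt.sub hleft) hmax
    have hR : ((φ x₀)⁻¹ • fderiv ℝ φ x₀) (e i0) - 0 ≤ 0 :=
      deriv_right_nonpos_of_localmax (hF.hasDerivWithinAt.sub hright) hmax
    rw [hflog]
    constructor <;> [linarith; linarith]
  constructor
  · -- PART 2: tangential first derivatives vanish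
    intro j hj
    have hcurve : HasDerivAt (fun t : ℝ => x₀ + t • e j) (e j) 0 := by
      simpa using ((hasDerivAt_id (0:ℝ)).smul_const (e j)).const_add x₀
    have hc0 : x₀ = x₀ + (0:ℝ) • e j := by simp
    have hFj : HasDerivAt (fun t : ℝ => Real.log (φ (x₀ + t • e j)))
        (((φ x₀)⁻¹ • fderiv ℝ φ x₀) (e j)) 0 := by
      have := hlogφ.comp_hasDerivAt_of_eq 0 hcurve hc0
      simpa [Function.comp_def] using this
    set R : ℝ → ℝ := fun t => Real.sqrt (r₀^2 + t^2) with hRdef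
    have hR0 : R 0 = r₀ := by simp [hRdef, Real.sqrt_sq hr₀.le]
    have hRd : HasDerivAt R 0 0 := by
      have hin : HasDerivAt (fun t : ℝ => r₀^2 + t^2) 0 0 := by
        simpa using (hasDerivAt_pow 2 (0:ℝ)).const_add (r₀^2)
      have := hin.sqrt (by positivity)
      simpa using this
    have hRmem : ∀ t, R t ∈ Set.Ici r₀ := by
      intro t
      rw [Set.mem_Ici, hRdef]
      calc r₀ = Real.sqrt (r₀^2) := (Real.sqrt_sq hr₀.le).symm
        _ ≤ Real.sqrt (r₀^2 + t^2) := Real.sqrt_le_sqrt (by nlinarith)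
    have hGR : HasDerivAt (fun t => Real.log (U (R t))) 0 0 := by
      have := hright.scomp_hasDerivAt_of_eq 0 hRd hRmem hR0.symm
      simpa [Function.comp_def] using this
    have hinner : ∀ t : ℝ, (inner ℝ x₀ (t • e j) : ℝ) = 0 := by
      intro t
      rw [real_inner_smul_right, hx₀, he, EuclideanSpace.inner_single_left]
      simp only [EuclideanSpace.single_apply, map_id, RingHom.id_apply, PiLp.smul_apply,
        smul_eq_mul, mul_ite, mul_one, mul_zero, ite_eq_right_iff]
      intro h
      exact absurd h.symm hj
    have hnormc : ∀ t : ℝ, ‖x₀ + t • e j‖ = R t := by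
      intro t
      have hsq : ‖x₀ + t • e j‖^2 = r₀^2 + t^2 := by
        rw [norm_add_sq_real, hinner, hnormx₀, norm_smul, hnorme, mul_one,
          Real.norm_eq_abs, sq_abs]
        ring
      have hRt : R t = Real.sqrt (r₀^2 + t^2) := rfl
      rw [hRt, ← hsq, Real.sqrt_sq (norm_nonneg _)]
    have hctt : Tendsto (fun t : ℝ => x₀ + t • e j) (𝓝 0) (𝓝 x₀) := by
      have : Continuous (fun t : ℝ => x₀ + t • e j) :=
        continuous_const.add (continuous_id.smul continuous_const)
      simpa using this.tendsto 0
    have hmax : ∀ᶠ t in 𝓝 (0:ℝ),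
        (fun t => Real.log (φ (x₀ + t • e j)) - Real.log (U (R t))) t ≤
        (fun t => Real.log (φ (x₀ + t • e j)) - Real.log (U (R t))) 0 := by
      have h0 : Real.log (φ (x₀ + (0:ℝ) • e j)) - Real.log (U (R 0)) = 0 := by
        rw [hR0, ← hc0, heq, hnormx₀, sub_self]
      filter_upwards [hctt.eventually htouch, hctt.eventually hφpos] with t h1 h2
      rw [hnormc t] at h1
      have := Real.log_le_log h2 h1
      simp only [h0]
      linarith
    have hlm : IsLocalMax (fun t => Real.log (φ (x₀ + t • e j)) - Real.log (U (R t))) 0 := hmax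
    have := hlm.hasDerivAt_eq_zero (hFj.sub hGR)
    rw [hflog]
    linarith [this]
  · -- PART 3: second-order condition
    have hev2 : ∀ᶠ y in 𝓝 x₀, HasFDerivAt φ (fderiv ℝ φ y) y := by
      filter_upwards [hφ.eventually (by simp)] with y hy
      exact (hy.differentiableAt two_ne_zero).hasFDerivAt
    have hf1 : ContDiffAt ℝ 1 (fderiv ℝ φ) x₀ := hφ.fderiv_right (by norm_num)
    set f'' := fderiv ℝ (fderiv ℝ φ) x₀ with hf''def
    have hdf' : HasFDerivAt (fderiv ℝ φ) f'' x₀ := (hf1.differentiableAt one_ne_zero).hasFDerivAt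
    have hsym : ∀ v w, f'' v w = f'' w v := second_derivative_symmetric_of_eventually hev2 hdf'
    have hentry : ∀ i j : Fin n,
        fderiv ℝ (fun y => fderiv ℝ φ y (e j)) x₀ (e i) = f'' (e i) (e j) := by
      intro i j
      have h : HasFDerivAt (fun y => fderiv ℝ φ y (e j))
          ((ContinuousLinearMap.apply ℝ ℝ (e j)).comp f'') x₀ :=
        (ContinuousLinearMap.apply ℝ ℝ (e j)).hasFDerivAt.comp x₀ hdf'
      rw [h.fderiv]; rfl
    have hiee : ∀ i j : Fin n, (inner ℝ (e i) (e j) : ℝ) = if i = j then 1 else 0 := by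
      intro i j
      rw [he]
      rw [EuclideanSpace.inner_single_left]
      simp [EuclideanSpace.single_apply, eq_comm]
    set D1 : ℝ := fderiv ℝ φ x₀ (e i0) with hD1
    -- the key inequality
    have hkey : ∀ w : EuclideanSpace ℝ (Fin n), (inner ℝ x₀ w : ℝ) = 0 →
        f'' w w ≤ (1 / r₀) * D1 * ‖w‖^2 := by
      intro w hperp
      rcases eq_or_ne w 0 with hw0 | hw0
      · simp [hw0]
      have hwpos : 0 < ‖w‖ := norm_pos_iff.2 hw0
      set β : ℝ := ‖w‖ / r₀ with hβdef
      have hβ : 0 < β := div_pos hwpos hr₀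
      set γ : ℝ → EuclideanSpace ℝ (Fin n) :=
        fun t => Real.cos (β*t) • x₀ + (Real.sin (β*t) / β) • w with hγdef
      set γ' : ℝ → EuclideanSpace ℝ (Fin n) :=
        fun t => (-(Real.sin (β*t)) * β) • x₀ + Real.cos (β*t) • w with hγ'def
      have hscos : ∀ t : ℝ, HasDerivAt (fun s => Real.cos (β*s)) (-(Real.sin (β*t)) * β) t := by
        intro t
        have h1 : HasDerivAt (fun s : ℝ => β * s) β t := by
          simpa using (hasDerivAt_id t).const_mul β
        simpa [Function.comp_def] using (Real.hasDerivAt_cos (β*t)).comp t h1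
      have hssin : ∀ t : ℝ, HasDerivAt (fun s => Real.sin (β*s) / β) (Real.cos (β*t)) t := by
        intro t
        have h1 : HasDerivAt (fun s : ℝ => β * s) β t := by
          simpa using (hasDerivAt_id t).const_mul β
        have h2 := ((Real.hasDerivAt_sin (β*t)).comp t h1).div_const β
        have h3 : Real.cos (β*t) * β / β = Real.cos (β*t) := by
          field_simp
        rw [h3] at h2
        exact h2
      have hγd : ∀ t, HasDerivAt γ (γ' t) t := by
        intro t
        exact ((hscos t).smul_const x₀).add ((hssin t).smul_const w)
      have hγ'd : HasDerivAt γ' ((-(β^2)) • x₀) 0 := by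
        have ha1 : HasDerivAt (fun s => -(Real.sin (β*s)) * β) (-(β^2)) 0 := by
          have h1 : HasDerivAt (fun s : ℝ => β * s) β 0 := by
            simpa using (hasDerivAt_id (0:ℝ)).const_mul β
          have h2 := (((Real.hasDerivAt_sin (β*0)).comp 0 h1).neg).mul_const β
          simpa [sq] using h2
        have ha2 : HasDerivAt (fun s => Real.cos (β*s)) 0 0 := by
          simpa using hscos 0
        have h := (ha1.smul_const x₀).add (ha2.smul_const w)
        rw [hγ'def]
        have e4 : (-(β^2)) • x₀ = (-(β^2)) • x₀ + (0:ℝ) • w := by simp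
        rw [e4]
        exact h
      have hγ0 : γ 0 = x₀ := by simp [hγdef]
      have hγ'0 : γ' 0 = w := by simp [hγ'def]
      have hw2 : ‖w‖^2 = β^2 * r₀^2 := by
        rw [hβdef]; field_simp
      have hnormγ : ∀ t, ‖γ t‖ = r₀ := by
        intro t
        have hsq : ‖γ t‖^2 = r₀^2 := by
          rw [hγdef]
          rw [norm_add_sq_real]
          rw [real_inner_smul_left, real_inner_smul_right, hperp]
          rw [norm_smul, norm_smul, hnormx₀]
          rw [mul_pow, mul_pow]
          rw [Real.norm_eq_abs, Real.norm_eq_abs, sq_abs, sq_abs]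
          rw [hw2, div_pow]
          have hβ2 : β^2 ≠ 0 := by positivity
          field_simp
          nlinarith [Real.sin_sq_add_cos_sq (β*t)]
        nlinarith [norm_nonneg (γ t), hsq, hr₀]
      have hγc : Tendsto γ (𝓝 0) (𝓝 x₀) := by
        rw [← hγ0]; exact (hγd 0).continuousAt
      have hφγ : ∀ᶠ t in 𝓝 (0:ℝ), HasDerivAt (fun s => φ (γ s))
          ((fderiv ℝ φ (γ t)) (γ' t)) t := by
        filter_upwards [hγc.eventually hev2] with t ht
        have := ht.comp_hasDerivAt t (hγd t)
        simpa [Function.comp_def] using this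
      have hc : HasDerivAt (fun t => fderiv ℝ φ (γ t)) (f'' w) 0 := by
        have := hdf'.comp_hasDerivAt_of_eq 0 (hγd 0) hγ0.symm
        rw [hγ'0] at this
        simpa [Function.comp_def] using this
      have hg : HasDerivAt (fun t => (fderiv ℝ φ (γ t)) (γ' t))
          (f'' w w + (fderiv ℝ φ x₀) ((-(β^2)) • x₀)) 0 := by
        have := hc.clm_apply hγ'd
        rw [hγ'0, hγ0] at this
        exact this
      have hmaxγ : ∀ᶠ t in 𝓝 (0:ℝ), (fun s => φ (γ s)) t ≤ (fun s => φ (γ s)) 0 := by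
        filter_upwards [hγc.eventually htouch] with t ht
        have : φ (γ t) ≤ U r₀ := by rwa [hnormγ t] at ht
        simpa [hγ0, heq, hnormx₀] using this
      have hfin := second_deriv_nonpos_of_localmax hφγ hg hmaxγ
      have hval : (fderiv ℝ φ x₀) ((-(β^2)) • x₀) = -(β^2) * r₀ * D1 := by
        have hx : (fderiv ℝ φ x₀) x₀ = r₀ * D1 := by
          calc (fderiv ℝ φ x₀) x₀ = (fderiv ℝ φ x₀) (r₀ • e i0) := by rw [← hx₀e]
            _ = r₀ * D1 := by rw [map_smul, smul_eq_mul, hD1]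
        rw [map_smul, smul_eq_mul, hx]
        ring
      rw [hval] at hfin
      have h2 : β^2 * r₀ * D1 = 1/r₀ * D1 * ‖w‖^2 := by
        rw [hw2]; field_simp
      linarith [hfin, h2]
    -- build the PosSemidef proof
    constructor
    · -- Hermitian
      ext i j
      simp only [Matrix.conjTranspose_apply, Matrix.neg_apply, Matrix.of_apply, star_trivial,
        star_neg, star_sub, star_mul', star_one, star_zero]
      rw [hentry, hentry, hsym (e (j:Fin n)) (e (i:Fin n))]
      have : (if j = i then (1:ℝ) else 0) = (if i = j then (1:ℝ) else 0) := by
        simp [eq_comm]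
      rw [this]
    · -- quadratic form
      intro v
      set w : EuclideanSpace ℝ (Fin n) := ∑ i : {i : Fin n // i ≠ i0}, v i • e (i : Fin n) with hw
      have hperp : (inner ℝ x₀ w : ℝ) = 0 := by
        rw [hw, inner_sum, hx₀e]
        apply Finset.sum_eq_zero
        intro i _
        rw [real_inner_smul_right, real_inner_smul_left, hiee]
        simp [Ne.symm i.2]
      have hnormw : ‖w‖^2 = ∑ i : {i : Fin n // i ≠ i0}, (v i)^2 := by
        rw [← real_inner_self_eq_norm_sq, hw, inner_sum]
        apply Finset.sum_congr rfl
        intro j _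
        rw [real_inner_smul_right, sum_inner, Finset.sum_eq_single j]
        · rw [real_inner_smul_left, hiee]
          simp [sq]
        · intro i _ hij
          rw [real_inner_smul_left, hiee]
          have : (i : Fin n) ≠ (j : Fin n) := fun h => hij (Subtype.ext h)
          simp [this]
        · intro h; exact absurd (Finset.mem_univ j) h
      have h1 : f'' w = ∑ i : {i : Fin n // i ≠ i0}, v i • f'' (e (i : Fin n)) := by
        rw [hw, map_sum]
        exact Finset.sum_congr rfl fun i _ => by rw [map_smul]
      have h1' : ∀ i : {i : Fin n // i ≠ i0},
          f'' (e (i : Fin n)) w = ∑ j : {i : Fin n // i ≠ i0}, v j * f'' (e (i:Fin n)) (e (j:Fin n)) := by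
        intro i
        rw [hw, map_sum]
        exact Finset.sum_congr rfl fun j _ => by rw [map_smul, smul_eq_mul]
      have hquad : f'' w w = ∑ i : {i : Fin n // i ≠ i0}, ∑ j : {i : Fin n // i ≠ i0},
          v i * f'' (e (i:Fin n)) (e (j:Fin n)) * v j := by
        calc f'' w w = (∑ i : {i : Fin n // i ≠ i0}, v i • f'' (e (i : Fin n))) w := by rw [h1]
          _ = ∑ i : {i : Fin n // i ≠ i0}, v i * (f'' (e (i : Fin n)) w) := by
              rw [ContinuousLinearMap.sum_apply]
              exact Finset.sum_congr rfl fun i _ => by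
                rw [ContinuousLinearMap.smul_apply, smul_eq_mul]
          _ = ∑ i : {i : Fin n // i ≠ i0}, ∑ j : {i : Fin n // i ≠ i0},
              v i * f'' (e (i:Fin n)) (e (j:Fin n)) * v j := by
              apply Finset.sum_congr rfl
              intro i _
              rw [h1' i, Finset.mul_sum]
              exact Finset.sum_congr rfl fun j _ => by ring
      have hkeyw := hkey w hperp
      rw [hnormw, hquad] at hkeyw
      -- unfold the matrix expression
      simp only [dotProduct, Matrix.mulVec, Matrix.neg_apply, Matrix.of_apply,
        star_trivial, Pi.star_apply]
      have hrw : ∀ i : {i : Fin n // i ≠ i0}, v i * ∑ j : {i : Fin n // i ≠ i0},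
          (-((fderiv ℝ (fun y => (fderiv ℝ φ y) (EuclideanSpace.single ((j : Fin n)) 1)) x₀)
                (EuclideanSpace.single ((i : Fin n)) 1)
            - 1 / r₀ * D1 * if i = j then 1 else 0)) * v j
          = (∑ j : {i : Fin n // i ≠ i0}, (-(v i * f'' (e (i:Fin n)) (e (j:Fin n)) * v j)))
            + 1/r₀ * D1 * (v i)^2 := by
        intro i
        rw [Finset.mul_sum]
        have hterm : ∀ j : {i : Fin n // i ≠ i0}, v i *
            ((-((fderiv ℝ (fun y => (fderiv ℝ φ y) (EuclideanSpace.single ((j : Fin n)) 1)) x₀)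
                (EuclideanSpace.single ((i : Fin n)) 1)
            - 1 / r₀ * D1 * if i = j then 1 else 0)) * v j)
            = (-(v i * f'' (e (i:Fin n)) (e (j:Fin n)) * v j))
              + 1/r₀ * D1 * ((if i = j then 1 else 0) * v i * v j) := by
          intro j
          have he' : (EuclideanSpace.single ((j : Fin n)) (1:ℝ)) = e (j : Fin n) := rfl
          have he'' : (EuclideanSpace.single ((i : Fin n)) (1:ℝ)) = e (i : Fin n) := rfl
          rw [he', he'', hentry]
          ring
        rw [Finset.sum_congr rfl (fun j _ => hterm j), Finset.sum_add_distrib]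
        congr 1
        rw [Finset.sum_eq_single i]
        · simp [sq]
        · intro j _ hij
          simp [if_neg (Ne.symm hij)]
        · intro h; exact absurd (Finset.mem_univ i) h
      simp only [Finsupp.sum_fintype, zero_mul, mul_zero, Finset.sum_const_zero, implies_true]
      simp_rw [mul_assoc (v _), ← Finset.mul_sum]
      rw [Finset.sum_congr rfl (fun i _ => hrw i)]
      rw [Finset.sum_add_distrib, ← Finset.mul_sum]
      have hneg : (∑ i : {i : Fin n // i ≠ i0}, ∑ j : {i : Fin n // i ≠ i0},
          (-(v i * f'' (e (i:Fin n)) (e (j:Fin n)) * v j)))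
          = -(∑ i : {i : Fin n // i ≠ i0}, ∑ j : {i : Fin n // i ≠ i0},
            v i * f'' (e (i:Fin n)) (e (j:Fin n)) * v j) := by
        rw [← Finset.sum_neg_distrib]
        exact Finset.sum_congr rfl fun i _ => by rw [← Finset.sum_neg_distrib]
      rw [hneg]
      linarith [hkeyw]

end
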